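/- For every non-negative integer n, the image of θⁿ equals F̃(n). -/

import Mathlib

open Submodule

/-- The projection onto `A` along a complement `B`, as an endomorphism of `E`. -/
noncomputable def projAlong {K E : Type*} [Field K] [AddCommGroup E] [Module K E]
    (A B : Submodule K E) (h : IsCompl A B) : E →ₗ[K] E :=
  A.subtype ∘ₗ A.linearProjOfIsCompl B h

/-- `θ = p_{W₁}^{W₂} ∘ p_{V₁}^{V₂} − p_{V₁}^{V₂} ∘ p_{W₁}^{W₂}`. -/
noncomputable def theta {K E : Type*} [Field K] [AddCommGroup E] [Module K E]
    (V W : Fin 2 → Submodule K E)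
    (hV : IsCompl (V 0) (V 1)) (hW : IsCompl (W 0) (W 1)) : Module.End K E :=
  projAlong (W 0) (W 1) hW ∘ₗ projAlong (V 0) (V 1) hV -
    projAlong (V 0) (V 1) hV ∘ₗ projAlong (W 0) (W 1) hW

/-- The decreasing sequence of subspaces `F̃(n)`:
`F̃(0) = E`, `F̃(n+1) = ∩_{i,j} ((F̃(n) ∩ Vᵢ) + (F̃(n) ∩ Wⱼ))`. -/
noncomputable def FTilde {K E : Type*} [Field K] [AddCommGroup E] [Module K E]
    (V W : Fin 2 → Submodule K E) : ℕ → Submodule K E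
  | 0 => ⊤
  | n + 1 => ⨅ i : Fin 2, ⨅ j : Fin 2, (FTilde V W n ⊓ V i) ⊔ (FTilde V W n ⊓ W j)

section Aux

variable {K E : Type*} [Field K] [AddCommGroup E] [Module K E]

lemma projAlong_mem {A B : Submodule K E} (h : IsCompl A B) (z : E) :
    projAlong A B h z ∈ A := SetLike.coe_mem _

lemma projAlong_left {A B : Submodule K E} (h : IsCompl A B) {z : E} (hz : z ∈ A) :
    projAlong A B h z = z := by
  exact congrArg Subtype.val (projectionOnto_apply_of_mem_left h hz)

lemma projAlong_right {A B : Submodule K E} (h : IsCompl A B) {z : E} (hz : z ∈ B) :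
    projAlong A B h z = 0 := by
  show A.subtype (A.projectionOnto B h z) = 0
  rw [projectionOnto_apply_of_mem_right h hz, map_zero]

lemma projAlong_sub_mem {A B : Submodule K E} (h : IsCompl A B) (z : E) :
    z - projAlong A B h z ∈ B := by
  have hz : z ∈ A ⊔ B := by rw [h.sup_eq_top]; exact mem_top
  obtain ⟨a, ha, b, hb, rfl⟩ := Submodule.mem_sup.mp hz
  have : projAlong A B h (a + b) = a := by
    rw [map_add, projAlong_left h ha, projAlong_right h hb, add_zero]
  rw [this]
  simpa using hb

lemma projAlong_idem {A B : Submodule K E} (h : IsCompl A B) (z : E) :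
    projAlong A B h (projAlong A B h z) = projAlong A B h z :=
  projAlong_left h (projAlong_mem h z)

end Aux

/-- For every `n`, `im θⁿ = F̃(n)`. -/
theorem stmt2 {K E : Type*} [Field K] [AddCommGroup E] [Module K E]
    [FiniteDimensional K E] (hchar : (2 : K) ≠ 0)
    (V W : Fin 2 → Submodule K E)
    (hV : IsCompl (V 0) (V 1)) (hW : IsCompl (W 0) (W 1)) :
    ∀ n : ℕ, LinearMap.range ((theta V W hV hW) ^ n) = FTilde V W n := by
  set P := projAlong (V 0) (V 1) hV with hPdef
  set Q := projAlong (W 0) (W 1) hW with hQdef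
  set θ := theta V W hV hW with hθdef
  have hθapp : ∀ z : E, θ z = Q (P z) - P (Q z) := fun z => rfl
  have hPP : ∀ z : E, P (P z) = P z := projAlong_idem hV
  have hQQ : ∀ z : E, Q (Q z) = Q z := projAlong_idem hW
  -- key commutation: P * θ = θ * (1 - P), Q * θ = θ * (1 - Q)
  have hPθ : P * θ = θ * (1 - P) := by
    ext z
    simp only [Module.End.mul_apply, LinearMap.sub_apply, Module.End.one_apply, hθapp,
      map_sub, hPP, hQQ]
    abel
  have hQθ : Q * θ = θ * (1 - Q) := by
    ext z
    simp only [Module.End.mul_apply, LinearMap.sub_apply, Module.End.one_apply, hθapp,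
      map_sub, hPP, hQQ]
    abel
  have hcomm : ∀ (R : Module.End K E), R * θ = θ * (1 - R) →
      ∀ n : ℕ, ∃ g : Module.End K E, R * θ ^ n = θ ^ n * g := by
    intro R hR n
    induction n with
    | zero => exact ⟨R, by simp⟩
    | succ n ih =>
      obtain ⟨g, hg⟩ := ih
      refine ⟨1 - g, ?_⟩
      calc R * θ ^ (n + 1) = (R * θ) * θ ^ n := by rw [pow_succ', mul_assoc]
        _ = θ * ((1 - R) * θ ^ n) := by rw [hR, mul_assoc]
        _ = θ * (θ ^ n - θ ^ n * g) := by rw [sub_mul, one_mul, hg]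
        _ = θ ^ (n + 1) * (1 - g) := by rw [pow_succ']; noncomm_ring
  intro n
  induction n with
  | zero =>
    simp [FTilde, LinearMap.range_eq_top]
    exact fun x => ⟨x, rfl⟩
  | succ n ih =>
    obtain ⟨g, hg⟩ := hcomm P hPθ n
    obtain ⟨h, hh⟩ := hcomm Q hQθ n
    have hrange : ∀ w : E, (θ ^ n) w ∈ FTilde V W n := by
      intro w; rw [← ih]; exact ⟨w, rfl⟩
    apply le_antisymm
    · -- range θ^(n+1) ≤ FTilde (n+1)
      show LinearMap.range (θ ^ (n + 1)) ≤ FTilde V W (n + 1)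
      rw [show FTilde V W (n + 1) = ⨅ i : Fin 2, ⨅ j : Fin 2,
        (FTilde V W n ⊓ V i) ⊔ (FTilde V W n ⊓ W j) from rfl]
      refine le_iInf fun i => le_iInf fun j => ?_
      rintro y ⟨x, rfl⟩
      set u := (θ ^ n) x with hu
      have hgx : ∀ w : E, P ((θ ^ n) w) = (θ ^ n) (g w) := fun w => LinearMap.congr_fun hg w
      have hhx : ∀ w : E, Q ((θ ^ n) w) = (θ ^ n) (h w) := fun w => LinearMap.congr_fun hh w
      have hmu : u ∈ FTilde V W n := hrange x
      have hmpu : P u ∈ FTilde V W n := by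
        rw [hu, hgx x]; exact hrange _
      have hmqu : Q u ∈ FTilde V W n := by
        rw [hu, hhx x]; exact hrange _
      have hmpqu : P (Q u) ∈ FTilde V W n := by
        rw [hu, hhx x, hgx _]; exact hrange _
      have hmqpu : Q (P u) ∈ FTilde V W n := by
        rw [hu, hgx x, hhx _]; exact hrange _
      have hyu : (θ ^ (n + 1)) x = Q (P u) - P (Q u) := by
        rw [pow_succ']; exact hθapp u
      fin_cases i <;> fin_cases j
      · -- V 0, W 0
        refine Submodule.mem_sup.mpr ⟨-(P (Q u)), ?_, Q (P u), ?_, by rw [hyu]; abel⟩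
        · exact ⟨neg_mem hmpqu, neg_mem (projAlong_mem hV _)⟩
        · exact ⟨hmqpu, projAlong_mem hW _⟩
      · -- V 0, W 1
        refine Submodule.mem_sup.mpr ⟨P u - P (Q u), ?_, -(P u - Q (P u)), ?_,
          by rw [hyu]; abel⟩
        · exact ⟨sub_mem hmpu hmpqu, sub_mem (projAlong_mem hV _) (projAlong_mem hV _)⟩
        · exact ⟨neg_mem (sub_mem hmpu hmqpu), neg_mem (projAlong_sub_mem hW _)⟩
      · -- V 1, W 0
        refine Submodule.mem_sup.mpr ⟨Q u - P (Q u), ?_, Q (P u) - Q u, ?_,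
          by rw [hyu]; abel⟩
        · exact ⟨sub_mem hmqu hmpqu, projAlong_sub_mem hV _⟩
        · exact ⟨sub_mem hmqpu hmqu, sub_mem (projAlong_mem hW _) (projAlong_mem hW _)⟩
      · -- V 1, W 1
        refine Submodule.mem_sup.mpr
          ⟨-((u - Q u) - P (u - Q u)), ?_, (u - P u) - Q (u - P u), ?_, ?_⟩
        · constructor
          · rw [map_sub]
            exact neg_mem (sub_mem (sub_mem hmu hmqu) (sub_mem hmpu hmpqu))
          · exact neg_mem (projAlong_sub_mem hV _)
        · constructor
          · rw [map_sub]
            exact sub_mem (sub_mem hmu hmpu) (sub_mem hmqu hmqpu)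
          · exact projAlong_sub_mem hW _
        · rw [hyu, map_sub, map_sub]
          abel
    · -- FTilde (n+1) ≤ range θ^(n+1)
      intro x hx
      rw [show FTilde V W (n + 1) = ⨅ i : Fin 2, ⨅ j : Fin 2,
        (FTilde V W n ⊓ V i) ⊔ (FTilde V W n ⊓ W j) from rfl] at hx
      simp only [Submodule.mem_iInf] at hx
      obtain ⟨a00, ha00, b00, hb00, hx00⟩ := Submodule.mem_sup.mp (hx 0 0)
      obtain ⟨a01, ha01, b01, hb01, hx01⟩ := Submodule.mem_sup.mp (hx 0 1)
      obtain ⟨a10, ha10, b10, hb10, hx10⟩ := Submodule.mem_sup.mp (hx 1 0)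
      obtain ⟨a11, ha11, b11, hb11, hx11⟩ := Submodule.mem_sup.mp (hx 1 1)
      set y := a01 + a10 - a11 - a11 + b00 - b11 with hy
      have hyF : y ∈ FTilde V W n := by
        exact sub_mem (add_mem (sub_mem (sub_mem (add_mem ha01.1 ha10.1) ha11.1) ha11.1)
          hb00.1) hb11.1
      rw [← ih] at hyF
      obtain ⟨z, hz⟩ := hyF
      refine ⟨z, ?_⟩
      rw [pow_succ', Module.End.mul_apply, hz, hθapp]
      -- basic projection facts
      have hPa01 : P a01 = a01 := projAlong_left hV ha01.2
      have hPa00 : P a00 = a00 := projAlong_left hV ha00.2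
      have hPa10 : P a10 = 0 := projAlong_right hV ha10.2
      have hPa11 : P a11 = 0 := projAlong_right hV ha11.2
      have hQb00 : Q b00 = b00 := projAlong_left hW hb00.2
      have hQb10 : Q b10 = b10 := projAlong_left hW hb10.2
      have hQb01 : Q b01 = 0 := projAlong_right hW hb01.2
      have hQb11 : Q b11 = 0 := projAlong_right hW hb11.2
      have hb00x : b00 = x - a00 := by rw [← hx00]; abel
      have hb11x : b11 = x - a11 := by rw [← hx11]; abel
      have ha01x : a01 = x - b01 := by rw [← hx01]; abel
      have ha00x : a00 = x - b00 := by rw [← hx00]; abel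
      have ha10x : a10 = x - b10 := by rw [← hx10]; abel
      have ha11x : a11 = x - b11 := by rw [← hx11]; abel
      have hPy : P y = a01 - a00 := by
        have h1 : P b00 = P x - a00 := by rw [hb00x, map_sub, hPa00]
        have h2 : P b11 = P x := by rw [hb11x, map_sub, hPa11, sub_zero]
        rw [hy]
        simp only [map_add, map_sub, hPa01, hPa10, hPa11, h1, h2]
        abel
      have hQPy : Q (P y) = b00 := by
        have h1 : Q a01 = Q x := by rw [ha01x, map_sub, hQb01, sub_zero]
        have h2 : Q a00 = Q x - b00 := by rw [ha00x, map_sub, hQb00]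
        rw [hPy, map_sub, h1, h2]
        abel
      have hQy : Q y = b00 - b10 := by
        have h1 : Q a01 = Q x := by rw [ha01x, map_sub, hQb01, sub_zero]
        have h2 : Q a10 = Q x - b10 := by rw [ha10x, map_sub, hQb10]
        have h3 : Q a11 = Q x := by rw [ha11x, map_sub, hQb11, sub_zero]
        rw [hy]
        simp only [map_add, map_sub, h1, h2, h3, hQb00, hQb11]
        abel
      have hPQy : P (Q y) = -a00 := by
        have h1 : P b00 = P x - a00 := by rw [hb00x, map_sub, hPa00]
        have h2 : P b10 = P x := by
          rw [show b10 = x - a10 from by rw [← hx10]; abel, map_sub, hPa10, sub_zero]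
        rw [hQy, map_sub, h1, h2]
        abel
      rw [hQPy, hPQy, ← hx00]
      abel
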